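/- Reduction of codirect to strict codirect solutions: let A, B be types, Q a finite type, M : NFA A Q a Mathlib NFA, and σ σ' : A → List B. Then M has a codirect solution with respect to (σ, σ') if and only if there exist t ≥ 1 and states q : Fin t → Q with q 0 ∈ M.start and q (t-1) ∈ M.accept such that for every i < t - 1, the NFA with the same step function as M, start set {q i} and accept set {q (i+1)} has a strict codirect solution with respect to (σ, σ'). -/

import Mathlib

/-- `w` is a codirect solution for the NFA `M` with respect to the morphisms
`σ, σ'`, witnessed by `vs`. -/
def CodirectWitness {A B Q : Type*} (M : NFA A Q) (σ σ' : A → List B)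
    (w : List A) (vs : List (List B)) : Prop :=
  w ∈ M.accepts ∧ ∃ h : vs.length = w.length,
    (∀ k, ∀ hk : k < w.length, (vs.get ⟨k, by omega⟩).Sublist (σ' (w.get ⟨k, hk⟩))) ∧
    w.flatMap σ = vs.flatten ∧
    ∀ k ≤ w.length, ((vs.take k).flatten).length ≤ ((w.take k).flatMap σ).length

/-- `w` is a strict codirect solution for the NFA `M` with respect to `σ, σ'`,
witnessed by `vs`. -/
def StrictCodirectWitness {A B Q : Type*} (M : NFA A Q) (σ σ' : A → List B)
    (w : List A) (vs : List (List B)) : Prop :=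
  CodirectWitness M σ σ' w vs ∧
    ∀ k, 1 ≤ k → k < w.length →
      ((vs.take k).flatten).length < ((w.take k).flatMap σ).length

namespace CodirectAux

variable {A B Q : Type*}

theorem mem_evalFrom_iff (M : NFA A Q) (S : Set Q) (w : List A) (q : Q) :
    q ∈ M.evalFrom S w ↔ ∃ p ∈ S, q ∈ M.evalFrom {p} w := by
  induction w generalizing S with
  | nil => simp [NFA.evalFrom]
  | cons a w ih =>
    show q ∈ M.evalFrom (M.stepSet S a) w ↔ _
    rw [ih]
    constructor
    · rintro ⟨r, hr, hq⟩
      rw [NFA.mem_stepSet] at hr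
      obtain ⟨p, hp, hr⟩ := hr
      refine ⟨p, hp, ?_⟩
      show q ∈ M.evalFrom (M.stepSet {p} a) w
      rw [ih]
      exact ⟨r, by simp [NFA.mem_stepSet, hr], hq⟩
    · rintro ⟨p, hp, hq⟩
      rw [show M.evalFrom {p} (a :: w) = M.evalFrom (M.stepSet {p} a) w from rfl, ih] at hq
      obtain ⟨r, hr, hq⟩ := hq
      simp [NFA.mem_stepSet] at hr
      exact ⟨r, NFA.mem_stepSet .. |>.2 ⟨p, hp, hr⟩, hq⟩

theorem evalFrom_append (M : NFA A Q) (S : Set Q) (u v : List A) :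
    M.evalFrom S (u ++ v) = M.evalFrom (M.evalFrom S u) v := by
  simp [NFA.evalFrom, List.foldl_append]

theorem piece_accepts (M : NFA A Q) (p q : Q) (w : List A) :
    w ∈ ({ M with start := {p}, accept := {q} } : NFA A Q).accepts ↔
      q ∈ M.evalFrom {p} w := by
  rw [NFA.mem_accepts]
  simp only [Set.mem_singleton_iff]
  constructor
  · rintro ⟨S, rfl, h⟩; exact h
  · intro h; exact ⟨q, rfl, h⟩

theorem cw_append (M : NFA A Q) (σ σ' : A → List B) (p r s : Q)
    (w₁ w₂ : List A) (vs₁ vs₂ : List (List B))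
    (h₁ : CodirectWitness { M with start := {p}, accept := {r} } σ σ' w₁ vs₁)
    (h₂ : CodirectWitness { M with start := {r}, accept := {s} } σ σ' w₂ vs₂) :
    CodirectWitness { M with start := {p}, accept := {s} } σ σ' (w₁ ++ w₂) (vs₁ ++ vs₂) := by
  obtain ⟨acc₁, len₁, sub₁, flat₁, pre₁⟩ := h₁
  obtain ⟨acc₂, len₂, sub₂, flat₂, pre₂⟩ := h₂
  rw [piece_accepts] at acc₁ acc₂
  refine ⟨?_, ?_, ?_, ?_, ?_⟩
  · rw [piece_accepts, evalFrom_append, mem_evalFrom_iff]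
    exact ⟨r, acc₁, acc₂⟩
  · simp [len₁, len₂]
  · intro k hk
    simp only [List.get_eq_getElem, List.length_append] at *
    rcases lt_or_ge k w₁.length with h | h
    · rw [List.getElem_append_left (by omega), List.getElem_append_left h]
      exact sub₁ k h
    · rw [List.getElem_append_right (by omega), List.getElem_append_right h]
      simp only [show k - vs₁.length = k - w₁.length from by omega]
      exact sub₂ (k - w₁.length) (by simp only [List.length_append] at hk; omega)
  · simp only [List.flatMap_append, List.flatten_append, flat₁, flat₂]
  · intro k hk
    simp only [List.length_append] at hk
    rw [List.take_append, List.take_append,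
      List.flatten_append, List.flatMap_append, List.length_append, List.length_append, len₁]
    rcases le_or_gt k w₁.length with h | h
    · have e : k - w₁.length = 0 := by omega
      simp only [e, List.take_zero, List.flatten_nil, List.flatMap_nil, List.length_nil]
      exact Nat.add_le_add (pre₁ k h) le_rfl
    · rw [show List.take k vs₁ = vs₁ from List.take_of_length_le (by omega),
        show List.take k w₁ = w₁ from List.take_of_length_le (by omega)]
      have := pre₂ (k - w₁.length) (by omega)
      have e : vs₁.flatten.length = (w₁.flatMap σ).length := by rw [flat₁]
      omega


theorem cw_split (M : NFA A Q) (σ σ' : A → List B) (p q : Q)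
    (w : List A) (vs : List (List B)) (k : ℕ) (hk : k ≤ w.length)
    (h : CodirectWitness { M with start := {p}, accept := {q} } σ σ' w vs)
    (ht : ((vs.take k).flatten).length = ((w.take k).flatMap σ).length) :
    ∃ r, CodirectWitness { M with start := {p}, accept := {r} } σ σ' (w.take k) (vs.take k) ∧
      CodirectWitness { M with start := {r}, accept := {q} } σ σ' (w.drop k) (vs.drop k) := by
  obtain ⟨acc, len, sub, flat, pre⟩ := h
  rw [piece_accepts] at acc
  rw [show w = w.take k ++ w.drop k from (List.take_append_drop k w).symm,
    evalFrom_append, mem_evalFrom_iff] at acc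
  obtain ⟨r, hr, hq⟩ := acc
  have flat2 : (w.take k).flatMap σ ++ (w.drop k).flatMap σ
      = (vs.take k).flatten ++ (vs.drop k).flatten := by
    rw [← List.flatMap_append, ← List.flatten_append, List.take_append_drop,
      List.take_append_drop]
    exact flat
  obtain ⟨flatA, flatB⟩ := List.append_inj flat2 ht.symm
  refine ⟨r, ⟨?_, ?_, ?_, ?_, ?_⟩, ?_, ?_, ?_, ?_, ?_⟩
  · rw [piece_accepts]; exact hr
  · simp [len]
  · intro j hj
    simp only [List.get_eq_getElem, List.length_take, lt_min_iff] at hj ⊢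
    rw [List.getElem_take, List.getElem_take]
    exact sub j hj.2
  · exact flatA
  · intro j hj
    simp only [List.length_take] at hj
    rw [List.take_take, List.take_take, show min j k = j from by omega]
    exact pre j (by omega)
  · rw [piece_accepts]; exact hq
  · simp [len]
  · intro j hj
    simp only [List.get_eq_getElem, List.length_drop] at hj ⊢
    rw [List.getElem_drop, List.getElem_drop]
    exact sub (k + j) (by omega)
  · exact flatB
  · intro j hj
    simp only [List.length_drop] at hj
    have e1 : ((vs.take (k+j)).flatten).length
        = ((vs.take k).flatten).length + (((vs.drop k).take j).flatten).length := by
      rw [List.take_add, List.flatten_append, List.length_append]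
    have e2 : (((w.take (k+j)).flatMap σ)).length
        = (((w.take k).flatMap σ)).length + (((w.drop k).take j).flatMap σ).length := by
      rw [List.take_add, List.flatMap_append, List.length_append]
    have := pre (k + j) (by omega)
    omega

def PieceRel (M : NFA A Q) (σ σ' : A → List B) (a b : Q) : Prop :=
  ∃ w vs, StrictCodirectWitness { M with start := {a}, accept := {b} } σ σ' w vs

theorem fwd (M : NFA A Q) (σ σ' : A → List B) :
    ∀ (n : ℕ) (w : List A) (vs : List (List B)) (p q : Q), w.length = n →
    CodirectWitness { M with start := {p}, accept := {q} } σ σ' w vs →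
    ∃ qs : List Q, qs.head? = some p ∧ qs.getLast? = some q ∧
      qs.Chain' (PieceRel M σ σ') := by
  intro n
  induction n using Nat.strong_induction_on with
  | _ n IH =>
  intro w vs p q hn h
  rcases Nat.eq_zero_or_pos n with rfl | hpos
  · have hw : w = [] := List.length_eq_zero_iff.mp hn
    subst hw
    have hqp : q = p := by
      have := h.1
      rw [piece_accepts] at this
      simpa [NFA.evalFrom] using this
    subst hqp
    exact ⟨[q], rfl, rfl, List.isChain_singleton q⟩
  · obtain ⟨acc, len, sub, flat, pre⟩ := h
    have hP : ∃ j, 0 < j ∧ j ≤ n ∧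
        ((vs.take j).flatten).length = ((w.take j).flatMap σ).length := by
      refine ⟨n, hpos, le_rfl, ?_⟩
      rw [List.take_of_length_le (by omega), List.take_of_length_le (by omega), flat]
    classical
    obtain ⟨hk0, hkn, hkt⟩ := Nat.find_spec hP
    set k := Nat.find hP with hkdef
    obtain ⟨r, h1, h2⟩ := cw_split M σ σ' p q w vs k (by omega) ⟨acc, len, sub, flat, pre⟩ hkt
    have hstrict : StrictCodirectWitness { M with start := {p}, accept := {r} } σ σ'
        (w.take k) (vs.take k) := by
      refine ⟨h1, ?_⟩
      intro j hj1 hj2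
      rw [List.length_take, lt_min_iff] at hj2
      rw [List.take_take, List.take_take, show min j k = j from by omega]
      have hle := pre j (by omega)
      have hne := Nat.find_min hP (show j < k from hj2.1)
      have : ((vs.take j).flatten).length ≠ ((w.take j).flatMap σ).length := by
        intro heq; exact hne ⟨by omega, by omega, heq⟩
      omega
    obtain ⟨qs, hh, hl, hc⟩ := IH (n - k) (by omega) (w.drop k) (vs.drop k) r q
      (by simp [hn]) h2
    refine ⟨p :: qs, rfl, ?_, ?_⟩
    · cases qs with
      | nil => simp at hh
      | cons b l => rw [List.getLast?_cons_cons]; exact hl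
    · show List.IsChain _ _; rw [List.isChain_cons]
      refine ⟨?_, hc⟩
      intro y hy
      rw [hh] at hy
      simp only [Option.mem_some_iff] at hy
      subst hy
      exact ⟨w.take k, vs.take k, hstrict⟩

theorem bwd (M : NFA A Q) (σ σ' : A → List B) :
    ∀ (qs : List Q) (p q : Q), qs.head? = some p → qs.getLast? = some q →
    qs.Chain' (PieceRel M σ σ') →
    ∃ w vs, CodirectWitness { M with start := {p}, accept := {q} } σ σ' w vs := by
  intro qs
  induction qs with
  | nil => intro p q h _ _; simp at h
  | cons a l IH =>
    intro p q hh hl hc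
    have hpa : a = p := by simpa using hh
    subst hpa
    cases l with
    | nil =>
      have hq : q = a := by simpa using hl.symm
      subst hq
      refine ⟨[], [], ?_, rfl, ?_, by simp, ?_⟩
      · rw [piece_accepts]; simp [NFA.evalFrom]
      · intro k hk; simp at hk
      · intro k hk; simp at hk; simp [hk]
    | cons b l' =>
      change List.IsChain _ _ at hc; rw [List.isChain_cons_cons] at hc
      obtain ⟨w₂, vs₂, h₂⟩ := IH b q rfl (by rw [← hl, List.getLast?_cons_cons]) hc.2
      obtain ⟨w₁, vs₁, h₁⟩ := hc.1
      exact ⟨w₁ ++ w₂, vs₁ ++ vs₂, cw_append M σ σ' a b q w₁ w₂ vs₁ vs₂ h₁.1 h₂⟩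

end CodirectAux

/-- Reduction of codirect solutions to strict codirect solutions. -/
theorem codirect_iff_pieces_strict_codirect {A B Q : Type*} [Fintype Q]
    (M : NFA A Q) (σ σ' : A → List B) :
    (∃ w vs, CodirectWitness M σ σ' w vs) ↔
    ∃ t : ℕ, ∃ ht : 1 ≤ t, ∃ q : Fin t → Q,
      q ⟨0, by omega⟩ ∈ M.start ∧ q ⟨t - 1, by omega⟩ ∈ M.accept ∧
      ∀ i, ∀ hi : i < t - 1, ∃ w vs,
        StrictCodirectWitness
          { M with start := {q ⟨i, by omega⟩}, accept := {q ⟨i + 1, by omega⟩} }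
          σ σ' w vs := by
  constructor
  · rintro ⟨w, vs, hacc, rest⟩
    rw [NFA.mem_accepts] at hacc
    obtain ⟨s, hs, hsev⟩ := hacc
    rw [CodirectAux.mem_evalFrom_iff] at hsev
    obtain ⟨p, hp, hev⟩ := hsev
    have h' : CodirectWitness { M with start := {p}, accept := {s} } σ σ' w vs :=
      ⟨(CodirectAux.piece_accepts M p s w).2 hev, rest⟩
    obtain ⟨qs, hh, hl, hc⟩ := CodirectAux.fwd M σ σ' w.length w vs p s rfl h'
    have hne : qs ≠ [] := by rintro rfl; simp at hh
    have hpos : 0 < qs.length := List.length_pos_iff.mpr hne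
    refine ⟨qs.length, hpos, fun i => qs.get i, ?_, ?_, ?_⟩
    · have h0 : qs[0]? = some p := by rw [← List.head?_eq_getElem?]; exact hh
      rw [List.getElem?_eq_getElem hpos] at h0
      have h2 : qs.get ⟨0, hpos⟩ = p := Option.some.inj h0
      show qs.get ⟨0, hpos⟩ ∈ M.start
      rw [h2]; exact hp
    · have h1 : qs[qs.length - 1]? = some s := by rw [← List.getLast?_eq_getElem?]; exact hl
      rw [List.getElem?_eq_getElem (by omega)] at h1
      have h2 : qs.get ⟨qs.length - 1, by omega⟩ = s := Option.some.inj h1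
      show qs.get ⟨qs.length - 1, by omega⟩ ∈ M.accept
      rw [h2]; exact hs
    · intro i hi
      exact List.isChain_iff_getElem.mp hc i (by omega)
  · rintro ⟨t, ht, q, hstart, haccept, hpieces⟩
    have hlen : (List.ofFn q).length = t := List.length_ofFn (f := q)
    obtain ⟨w, vs, hw⟩ := CodirectAux.bwd M σ σ' (List.ofFn q)
        (q ⟨0, by omega⟩) (q ⟨t - 1, by omega⟩)
        (by
          rw [List.head?_eq_getElem?, List.getElem?_eq_getElem (by omega),
            List.getElem_ofFn])
        (by
          rw [List.getLast?_eq_getElem?, List.getElem?_eq_getElem (by omega),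
            List.getElem_ofFn]
          exact congrArg _ (congrArg q (Fin.ext (by simp))))
        (by
          show List.IsChain _ _; rw [List.isChain_iff_getElem]
          intro i hi
          rw [hlen] at hi
          simp only [List.get_eq_getElem, List.getElem_ofFn]
          exact hpieces i (by omega))
    refine ⟨w, vs, ?_, hw.2⟩
    rw [NFA.mem_accepts]
    refine ⟨q ⟨t - 1, by omega⟩, haccept, ?_⟩
    rw [CodirectAux.mem_evalFrom_iff]
    exact ⟨q ⟨0, by omega⟩, hstart, (CodirectAux.piece_accepts M _ _ w).1 hw.1⟩
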